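/- Let n ≥ 1 and let h : ℝⁿ × ℝⁿ → ℝ be a smooth (C^∞) function. Define the vector fields X_c and X¹_h on ℝⁿ × ℝⁿ × ℝ (with coordinates (x,y,z)) by X_c(x,y,z) = (∂h/∂y(x,y), −∂h/∂x(x,y), ⟨y, ∂h/∂y(x,y)⟩) and X¹_h(x,y,z) = (∂h/∂y(x,y), −∂h/∂x(x,y), −h(x,y) + ⟨y, ∂h/∂y(x,y)⟩). Then the Lie bracket [X_c, X¹_h] vanishes identically on ℝⁿ × ℝⁿ × ℝ. -/

import Mathlib

open Matrix

/-- Partial gradient of `h(x,y)` with respect to `x`. -/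
noncomputable def pdx {n : ℕ} (h : (Fin n → ℝ) × (Fin n → ℝ) → ℝ)
    (x y : Fin n → ℝ) : Fin n → ℝ :=
  fun i => fderiv ℝ h (x, y) (Pi.single i 1, 0)

/-- Partial gradient of `h(x,y)` with respect to `y`. -/
noncomputable def pdy {n : ℕ} (h : (Fin n → ℝ) × (Fin n → ℝ) → ℝ)
    (x y : Fin n → ℝ) : Fin n → ℝ :=
  fun i => fderiv ℝ h (x, y) (0, Pi.single i 1)

section aux

variable {n : ℕ} {h : (Fin n → ℝ) × (Fin n → ℝ) → ℝ}

lemma pdx_smooth (hs : ContDiff ℝ (⊤ : ℕ∞) h) :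
    ContDiff ℝ (⊤ : ℕ∞) (fun q : (Fin n → ℝ) × (Fin n → ℝ) => pdx h q.1 q.2) := by
  have hfd : ContDiff ℝ (⊤ : ℕ∞) (fderiv ℝ h) :=
    hs.fderiv_right (by exact_mod_cast le_top)
  exact contDiff_pi.2 fun i => hfd.clm_apply contDiff_const

lemma pdy_smooth (hs : ContDiff ℝ (⊤ : ℕ∞) h) :
    ContDiff ℝ (⊤ : ℕ∞) (fun q : (Fin n → ℝ) × (Fin n → ℝ) => pdy h q.1 q.2) := by
  have hfd : ContDiff ℝ (⊤ : ℕ∞) (fderiv ℝ h) :=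
    hs.fderiv_right (by exact_mod_cast le_top)
  exact contDiff_pi.2 fun i => hfd.clm_apply contDiff_const

/-- The total derivative of `h` decomposes along the partial gradients. -/
lemma key_decomp (q : (Fin n → ℝ) × (Fin n → ℝ)) (u v : Fin n → ℝ) :
    fderiv ℝ h q (u, v) =
      (∑ i, u i * pdx h q.1 q.2 i) + (∑ i, v i * pdy h q.1 q.2 i) := by
  have hu : ((u, v) : (Fin n → ℝ) × (Fin n → ℝ)) =
      (∑ i, u i • (((Pi.single i 1 : Fin n → ℝ), (0 : Fin n → ℝ)) :
        (Fin n → ℝ) × (Fin n → ℝ))) +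
      (∑ i, v i • (((0 : Fin n → ℝ), (Pi.single i 1 : Fin n → ℝ)) :
        (Fin n → ℝ) × (Fin n → ℝ))) := by
    ext j
    · simp [Prod.fst_sum, Finset.sum_apply, Pi.single_apply, Finset.sum_ite_eq']
    · simp [Prod.snd_sum, Finset.sum_apply, Pi.single_apply, Finset.sum_ite_eq']
  rw [hu, map_add, map_sum, map_sum]
  simp only [_root_.map_smul, smul_eq_mul]
  rfl

/-- `Dh(∂_y h, −∂_x h) = 0` by antisymmetry. -/
lemma key_zero (q : (Fin n → ℝ) × (Fin n → ℝ)) :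
    fderiv ℝ h q (pdy h q.1 q.2, -pdx h q.1 q.2) = 0 := by
  rw [key_decomp, ← Finset.sum_add_distrib]
  apply Finset.sum_eq_zero
  intro i _
  simp only [Pi.neg_apply]
  ring

end aux

/-- The Lie bracket of the characteristic vector field `X_c` and the odd-symplectic
(contact) Hamiltonian vector field `X¹_h` of a smooth `z`-independent contact
Hamiltonian `h(x,y)` vanishes identically on `ℝⁿ × ℝⁿ × ℝ`. -/
theorem bracket_char_oddSymplectic_eq_zero (n : ℕ) (hn : 1 ≤ n)
    (h : (Fin n → ℝ) × (Fin n → ℝ) → ℝ) (hsmooth : ContDiff ℝ (⊤ : ℕ∞) h)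
    (Xc X1 : (Fin n → ℝ) × (Fin n → ℝ) × ℝ → (Fin n → ℝ) × (Fin n → ℝ) × ℝ)
    (hXc : Xc = fun p =>
      (pdy h p.1 p.2.1, -pdx h p.1 p.2.1, p.2.1 ⬝ᵥ pdy h p.1 p.2.1))
    (hX1 : X1 = fun p =>
      (pdy h p.1 p.2.1, -pdx h p.1 p.2.1,
        -h (p.1, p.2.1) + p.2.1 ⬝ᵥ pdy h p.1 p.2.1)) :
    ∀ p : (Fin n → ℝ) × (Fin n → ℝ) × ℝ,
      fderiv ℝ X1 p (Xc p) - fderiv ℝ Xc p (X1 p) = 0 := by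
  intro p
  have hfd : ContDiff ℝ (⊤ : ℕ∞) (fderiv ℝ h) :=
    hsmooth.fderiv_right (by exact_mod_cast le_top)
  set π : ((Fin n → ℝ) × (Fin n → ℝ) × ℝ) →L[ℝ] ((Fin n → ℝ) × (Fin n → ℝ)) :=
    (ContinuousLinearMap.fst ℝ _ _).prod
      ((ContinuousLinearMap.fst ℝ _ _).comp (ContinuousLinearMap.snd ℝ _ _)) with hπ
  set j : ℝ →L[ℝ] ((Fin n → ℝ) × (Fin n → ℝ) × ℝ) :=
    (0 : ℝ →L[ℝ] (Fin n → ℝ)).prod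
      ((0 : ℝ →L[ℝ] (Fin n → ℝ)).prod (ContinuousLinearMap.id ℝ ℝ)) with hj
  set Φ : ((Fin n → ℝ) × (Fin n → ℝ)) → ((Fin n → ℝ) × (Fin n → ℝ) × ℝ) :=
    fun q => (pdy h q.1 q.2, -pdx h q.1 q.2, q.2 ⬝ᵥ pdy h q.1 q.2) with hΦ
  set g : ((Fin n → ℝ) × (Fin n → ℝ) × ℝ) → ((Fin n → ℝ) × (Fin n → ℝ) × ℝ) :=
    fun p => j (-(h (π p))) with hg
  have hπapp : ∀ p : (Fin n → ℝ) × (Fin n → ℝ) × ℝ, π p = (p.1, p.2.1) := by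
    intro p; simp [hπ]
  have hXc' : Xc = Φ ∘ π := by
    funext q; rw [hXc]; simp [hΦ, Function.comp, hπapp]
  have hX1' : X1 = fun q => Xc q + g q := by
    funext q; rw [hX1, hXc]; simp [hg, hj, hπapp, Prod.ext_iff]; ring
  -- smoothness of Φ
  have hΦs : ContDiff ℝ (⊤ : ℕ∞) Φ := by
    refine ContDiff.prodMk (pdy_smooth hsmooth) (ContDiff.prodMk (ContDiff.neg (pdx_smooth hsmooth)) ?_)
    have : ContDiff ℝ (⊤ : ℕ∞)
        (fun q : (Fin n → ℝ) × (Fin n → ℝ) => ∑ i, q.2 i * pdy h q.1 q.2 i) := by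
      apply ContDiff.sum
      intro i _
      exact (((ContinuousLinearMap.proj i : ((Fin n → ℝ)) →L[ℝ] ℝ).comp
        (ContinuousLinearMap.snd ℝ _ _)).contDiff).mul (hfd.clm_apply contDiff_const)
    simpa [dotProduct] using this
  have hXcdiff : Differentiable ℝ Xc :=
    hXc' ▸ ((hΦs.comp π.contDiff).differentiable (by simp))
  have hhdiff : Differentiable ℝ (fun p : (Fin n → ℝ) × (Fin n → ℝ) × ℝ => -(h (π p))) :=
    (((hsmooth.differentiable (by simp)).comp π.differentiable).neg)
  have hgdiff : Differentiable ℝ g := fun p => (j.differentiableAt.comp p (hhdiff p))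
  -- derivative of Xc
  have hfXc : fderiv ℝ Xc p = (fderiv ℝ Φ (π p)).comp (π : _ →L[ℝ] _) := by
    rw [hXc']
    have hcomp := fderiv_comp p
      ((hΦs.differentiable (by simp)) (π p)) π.differentiableAt
    rw [π.fderiv] at hcomp
    exact hcomp
  -- derivative of g
  have hfneg : fderiv ℝ (fun p : (Fin n → ℝ) × (Fin n → ℝ) × ℝ => -(h (π p))) p
      = -((fderiv ℝ h (π p)).comp (π : _ →L[ℝ] _)) := by
    rw [fderiv_fun_neg]
    have hcomp := fderiv_comp p
      ((hsmooth.differentiable (by simp)) (π p)) π.differentiableAt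
    rw [π.fderiv] at hcomp
    exact congrArg Neg.neg hcomp
  have hfg : fderiv ℝ g p
      = j.comp (-((fderiv ℝ h (π p)).comp (π : _ →L[ℝ] _))) := by
    have hcomp := fderiv_comp p j.differentiableAt (hhdiff p)
    rw [j.fderiv, hfneg] at hcomp
    exact hcomp
  -- split fderiv of X1
  have hfX1 : fderiv ℝ X1 p = fderiv ℝ Xc p + fderiv ℝ g p := by
    rw [hX1']
    exact fderiv_add (hXcdiff p) (hgdiff p)
  have h1 : fderiv ℝ Xc p (g p) = 0 := by
    rw [hfXc]
    have hz : π (g p) = 0 := by simp [hg, hj, hπ]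
    simp [ContinuousLinearMap.comp_apply, hz]
  have h2 : fderiv ℝ g p (Xc p) = 0 := by
    have hπXc : π (Xc p) = (pdy h (π p).1 (π p).2, -pdx h (π p).1 (π p).2) := by
      rw [hXc]; simp [hπapp]
    rw [hfg]
    simp [ContinuousLinearMap.comp_apply, hπXc, key_zero (h := h) (π p)]
  rw [hfX1, hX1']
  simp only [ContinuousLinearMap.add_apply, map_add]
  rw [h1, h2]
  abel
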